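/- Let c ∈ ℂ* with cΓ = Γ and c(s+Γ) = s+Γ, let τ: (Ω,+) → (ℂ*,·) be a group homomorphism, and let d ∈ ℂ* with d² = c^{−1}. Then the ℂ-linear map σ: SV → SV defined on basis elements by σ(L_{α,i}) = τ(α)·c^{i−1}·L_{cα,i} (α ∈ Γ, i ∈ ℤ_{≥0}) and σ(G_{μ,i}) = τ(μ)·c^{i}·d·G_{cμ,i} (μ ∈ s+Γ, i ∈ ℤ_{≥0}) is an automorphism of SV. -/

import Mathlib

noncomputable section

namespace SVSuper

variable (Γ : AddSubgroup ℂ) (s : ℂ)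

/-- Basis index type of `SV[Γ,s]`: `Sum.inl (α, i)` stands for `L_{α,i}` (`α ∈ Γ`),
`Sum.inr (μ, j)` stands for `G_{μ,j}` (`μ ∈ s + Γ`). -/
abbrev Idx : Type := (Γ × ℕ) ⊕ ({μ : ℂ // μ - s ∈ Γ} × ℕ)

/-- The underlying vector space of `SV[Γ,s]`: the free `ℂ`-module on `Idx`. -/
abbrev SV : Type := Idx Γ s →₀ ℂ

/-- The basis vector `L_{α,i}`. -/
def lgen (α : ℂ) (hα : α ∈ Γ) (i : ℕ) : SV Γ s :=
  Finsupp.single (Sum.inl (⟨α, hα⟩, i)) 1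

/-- The basis vector `G_{μ,j}`. -/
def ggen (μ : ℂ) (hμ : μ - s ∈ Γ) (j : ℕ) : SV Γ s :=
  Finsupp.single (Sum.inr (⟨μ, hμ⟩, j)) 1

theorem memLG {α μ : ℂ} (hα : α ∈ Γ) (hμ : μ - s ∈ Γ) : α + μ - s ∈ Γ := by
  have h : α + μ - s = α + (μ - s) := by ring
  rw [h]; exact add_mem hα hμ

theorem memGG (hs : 2 * s ∈ Γ) {μ ν : ℂ} (hμ : μ - s ∈ Γ) (hν : ν - s ∈ Γ) :
    μ + ν ∈ Γ := by
  have h : μ + ν = (μ - s) + (ν - s) + 2 * s := by ring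
  rw [h]; exact add_mem (add_mem hμ hν) hs

/-- The bracket on basis vectors (any symbol with second index `-1` is interpreted as `0`;
here this is automatic since the corresponding coefficient vanishes when `i = j = 0`). -/
def bk (hs : 2 * s ∈ Γ) : Idx Γ s → Idx Γ s → SV Γ s
  | Sum.inl (⟨α, hα⟩, i), Sum.inl (⟨β, hβ⟩, j) =>
      (β - α) • lgen Γ s (α + β) (add_mem hα hβ) (i + j)
        + ((j : ℂ) - (i : ℂ)) • lgen Γ s (α + β) (add_mem hα hβ) (i + j - 1)
  | Sum.inl (⟨α, hα⟩, i), Sum.inr (⟨μ, hμ⟩, j) =>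
      (μ - α / 2) • ggen Γ s (α + μ) (memLG Γ s hα hμ) (i + j)
        + ((j : ℂ) - (i : ℂ) / 2) • ggen Γ s (α + μ) (memLG Γ s hα hμ) (i + j - 1)
  | Sum.inr (⟨μ, hμ⟩, i), Sum.inl (⟨α, hα⟩, j) =>
      -((μ - α / 2) • ggen Γ s (α + μ) (memLG Γ s hα hμ) (j + i)
        + ((i : ℂ) - (j : ℂ) / 2) • ggen Γ s (α + μ) (memLG Γ s hα hμ) (j + i - 1))
  | Sum.inr (⟨μ, hμ⟩, i), Sum.inr (⟨ν, hν⟩, j) =>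
      (2 : ℂ) • lgen Γ s (μ + ν) (memGG Γ s hs hμ hν) (i + j)

/-- The bilinear bracket of `SV[Γ,s]`. -/
def bkt (hs : 2 * s ∈ Γ) (x y : SV Γ s) : SV Γ s :=
  x.sum fun a ca => y.sum fun b cb => (ca * cb) • bk Γ s hs a b

/-- `x` lies in the even part `SV_0̄` (the span of the `L_{α,i}`). -/
def IsEvenElt (x : SV Γ s) : Prop := ∀ b, x (Sum.inr b) = 0

/-- `x` lies in the odd part `SV_1̄` (the span of the `G_{μ,j}`). -/
def IsOddElt (x : SV Γ s) : Prop := ∀ a, x (Sum.inl a) = 0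

/-- `x` is `ℤ₂`-homogeneous. -/
def IsHomog (x : SV Γ s) : Prop := IsEvenElt Γ s x ∨ IsOddElt Γ s x

/-- `x` lies in the degree-`γ` component `SV_γ = span{L_{γ,i}, G_{γ,i}}` of the `Ω`-grading. -/
def InDeg (γ : ℂ) (x : SV Γ s) : Prop :=
  (∀ p : Γ × ℕ, (p.1 : ℂ) ≠ γ → x (Sum.inl p) = 0) ∧
  (∀ q : {μ : ℂ // μ - s ∈ Γ} × ℕ, (q.1 : ℂ) ≠ γ → x (Sum.inr q) = 0)

/-- The group `Ω`, generated by `Γ ∪ {s}`. -/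
def Omega : AddSubgroup ℂ := Γ ⊔ AddSubgroup.closure {s}

theorem gamma_mem_Omega {α : ℂ} (hα : α ∈ Γ) : α ∈ Omega Γ s :=
  AddSubgroup.mem_sup_left hα

theorem s_mem_Omega : s ∈ Omega Γ s :=
  AddSubgroup.mem_sup_right (AddSubgroup.subset_closure (Set.mem_singleton s))

theorem smu_mem_Omega {μ : ℂ} (hμ : μ - s ∈ Γ) : μ ∈ Omega Γ s := by
  have h := add_mem (gamma_mem_Omega Γ s hμ) (s_mem_Omega Γ s)
  rwa [sub_add_cancel] at h

/-- The `Ω`-degree of a basis index. -/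
def idxDeg : Idx Γ s → ℂ
  | Sum.inl p => (p.1 : ℂ)
  | Sum.inr q => (q.1 : ℂ)

theorem idxDeg_mem (a : Idx Γ s) : idxDeg Γ s a ∈ Omega Γ s := by
  cases a with
  | inl p => exact gamma_mem_Omega Γ s p.1.2
  | inr q => exact smu_mem_Omega Γ s q.1.2

/-- The derivation `D_φ` attached to a group homomorphism `φ : (Ω,+) → (ℂ,+)`:
`D_φ (L_{α,i}) = φ(α) • L_{α,i}` and `D_φ (G_{μ,j}) = φ(μ) • G_{μ,j}`. -/
def Dphi (φ : ↥(Omega Γ s) →+ ℂ) : SV Γ s →ₗ[ℂ] SV Γ s :=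
  Finsupp.lsum ℂ fun a => φ ⟨idxDeg Γ s a, idxDeg_mem Γ s a⟩ • Finsupp.lsingle a

/-- `D` is a parity-`0` (even) derivation of `SV[Γ,s]`. -/
def IsEvenDer (hs : 2 * s ∈ Γ) (D : SV Γ s →ₗ[ℂ] SV Γ s) : Prop :=
  (∀ x, IsEvenElt Γ s x → IsEvenElt Γ s (D x)) ∧
  (∀ x, IsOddElt Γ s x → IsOddElt Γ s (D x)) ∧
  (∀ x y, IsHomog Γ s x →
    D (bkt Γ s hs x y) = bkt Γ s hs (D x) y + bkt Γ s hs x (D y))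

/-- `D` is a parity-`1` (odd) derivation of `SV[Γ,s]`. -/
def IsOddDer (hs : 2 * s ∈ Γ) (D : SV Γ s →ₗ[ℂ] SV Γ s) : Prop :=
  (∀ x, IsEvenElt Γ s x → IsOddElt Γ s (D x)) ∧
  (∀ x, IsOddElt Γ s x → IsEvenElt Γ s (D x)) ∧
  (∀ x y, IsEvenElt Γ s x →
    D (bkt Γ s hs x y) = bkt Γ s hs (D x) y + bkt Γ s hs x (D y)) ∧
  (∀ x y, IsOddElt Γ s x →
    D (bkt Γ s hs x y) = bkt Γ s hs (D x) y - bkt Γ s hs x (D y))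

/-- `D` is a derivation of `SV[Γ,s]`: a sum of an even and an odd derivation. -/
def IsDer (hs : 2 * s ∈ Γ) (D : SV Γ s →ₗ[ℂ] SV Γ s) : Prop :=
  ∃ D0 D1, IsEvenDer Γ s hs D0 ∧ IsOddDer Γ s hs D1 ∧ D = D0 + D1

/-- `D` has degree `γ`: it maps `SV_δ` into `SV_{δ+γ}` for every `δ`. -/
def HasDeg (γ : ℂ) (D : SV Γ s →ₗ[ℂ] SV Γ s) : Prop :=
  ∀ (δ : ℂ) (x : SV Γ s), InDeg Γ s δ x → InDeg Γ s (δ + γ) (D x)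

/-- `ψ` is a 2-cocycle on `SV[Γ,s]` (super skew-symmetry and super Jacobi identity,
with the sign `(-1)^{|x||y|}` spelled out according to the parities). -/
def IsCocycle (hs : 2 * s ∈ Γ) (ψ : SV Γ s →ₗ[ℂ] SV Γ s →ₗ[ℂ] ℂ) : Prop :=
  (∀ x y, IsHomog Γ s x → IsHomog Γ s y → (IsEvenElt Γ s x ∨ IsEvenElt Γ s y) →
    ψ x y = - ψ y x) ∧
  (∀ x y, IsOddElt Γ s x → IsOddElt Γ s y → ψ x y = ψ y x) ∧
  (∀ x y z, IsHomog Γ s x → IsHomog Γ s y → (IsEvenElt Γ s x ∨ IsEvenElt Γ s y) →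
    ψ x (bkt Γ s hs y z) = ψ (bkt Γ s hs x y) z + ψ y (bkt Γ s hs x z)) ∧
  (∀ x y z, IsOddElt Γ s x → IsOddElt Γ s y →
    ψ x (bkt Γ s hs y z) = ψ (bkt Γ s hs x y) z - ψ y (bkt Γ s hs x z))

/-- `f : SV → ℂ` satisfies the recursive formulas associated to the 2-cocycle `ψ`. -/
def IsAssocMap (hs : 2 * s ∈ Γ) (ψ : SV Γ s →ₗ[ℂ] SV Γ s →ₗ[ℂ] ℂ)
    (f : SV Γ s →ₗ[ℂ] ℂ) : Prop :=
  (∀ i : ℕ, f (lgen Γ s 0 (zero_mem Γ) i)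
      = ψ (lgen Γ s 0 (zero_mem Γ) 0) (lgen Γ s 0 (zero_mem Γ) (i + 1)) / (i + 1)) ∧
  (∀ (α : ℂ) (hα : α ∈ Γ) (i : ℕ), α ≠ 0 →
    f (lgen Γ s α hα i)
      = (ψ (lgen Γ s 0 (zero_mem Γ) 0) (lgen Γ s α hα i) - (i : ℂ) * f (lgen Γ s α hα (i - 1))) / α) ∧
  (∀ (h0 : (0 : ℂ) - s ∈ Γ) (i : ℕ),
    f (ggen Γ s 0 h0 i) = (2 / (2 * (i : ℂ) - 1)) * ψ (lgen Γ s 0 (zero_mem Γ) 1) (ggen Γ s 0 h0 i)) ∧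
  (∀ (μ : ℂ) (hμ : μ - s ∈ Γ) (i : ℕ), μ ≠ 0 →
    f (ggen Γ s μ hμ i)
      = (ψ (lgen Γ s 0 (zero_mem Γ) 0) (ggen Γ s μ hμ i) - (i : ℂ) * f (ggen Γ s μ hμ (i - 1))) / μ)


/-! ### Auxiliary machinery for `aut_SV_construction` -/

section Aux

variable (Γ : AddSubgroup ℂ) (s : ℂ)

/-- Bracket as a bilinear map. -/
def bkInner (hs : 2 * s ∈ Γ) (a : Idx Γ s) : SV Γ s →ₗ[ℂ] SV Γ s :=
  Finsupp.lsum ℂ fun b => LinearMap.toSpanSingleton ℂ (SV Γ s) (bk Γ s hs a b)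

def bkB (hs : 2 * s ∈ Γ) : SV Γ s →ₗ[ℂ] SV Γ s →ₗ[ℂ] SV Γ s :=
  Finsupp.lsum ℂ fun a =>
    LinearMap.toSpanSingleton ℂ (SV Γ s →ₗ[ℂ] SV Γ s) (bkInner Γ s hs a)

lemma bkInner_apply (hs : 2 * s ∈ Γ) (a : Idx Γ s) (y : SV Γ s) :
    bkInner Γ s hs a y = y.sum fun b cb => cb • bk Γ s hs a b := by
  rw [bkInner, Finsupp.lsum_apply]
  exact Finsupp.sum_congr fun b _ => by rw [LinearMap.toSpanSingleton_apply]

lemma bkt_eq_bkB (hs : 2 * s ∈ Γ) (x y : SV Γ s) :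
    bkt Γ s hs x y = bkB Γ s hs x y := by
  rw [bkt, bkB, Finsupp.lsum_apply, LinearMap.finsupp_sum_apply]
  refine Finsupp.sum_congr fun a _ => ?_
  rw [LinearMap.toSpanSingleton_apply, LinearMap.smul_apply, bkInner_apply,
    Finsupp.smul_sum]
  refine Finsupp.sum_congr fun b _ => ?_
  rw [smul_smul]

lemma bkB_single_single (hs : 2 * s ∈ Γ) (a b : Idx Γ s) (r t : ℂ) :
    bkB Γ s hs (Finsupp.single a r) (Finsupp.single b t) = (r * t) • bk Γ s hs a b := by
  rw [← bkt_eq_bkB, bkt]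
  rw [Finsupp.sum_single_index, Finsupp.sum_single_index]
  · simp
  · simp [Finsupp.sum_single_index]

/-- The generic "rescale along a basis bijection" linear map. -/
def sigAux (co : Idx Γ s → ℂ) (m : Idx Γ s → Idx Γ s) : SV Γ s →ₗ[ℂ] SV Γ s :=
  Finsupp.lsum ℂ fun a => co a • Finsupp.lsingle (m a)

lemma sigAux_single (co : Idx Γ s → ℂ) (m : Idx Γ s → Idx Γ s) (a : Idx Γ s) (r : ℂ) :
    sigAux Γ s co m (Finsupp.single a r) = Finsupp.single (m a) (co a * r) := by
  simp [sigAux, Finsupp.smul_single, mul_comm]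

lemma lgen_congr {x x' : ℂ} (h : x ∈ Γ) (h' : x' ∈ Γ) (e : x = x') (i : ℕ) :
    lgen Γ s x h i = lgen Γ s x' h' i := by subst e; rfl

lemma ggen_congr {x x' : ℂ} (h : x - s ∈ Γ) (h' : x' - s ∈ Γ) (e : x = x') (i : ℕ) :
    ggen Γ s x h i = ggen Γ s x' h' i := by subst e; rfl

end Aux

section Main

variable (Γ : AddSubgroup ℂ) (s : ℂ) (c : ℂ) (τ : ℂ → ℂ) (d : ℂ)

/-- The index bijection `L_{α,i} ↦ L_{cα,i}`, `G_{μ,i} ↦ G_{cμ,i}`. -/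
def mIdx (hcΓ : ∀ x : ℂ, x ∈ Γ ↔ c * x ∈ Γ)
    (hcs : ∀ x : ℂ, x - s ∈ Γ ↔ c * x - s ∈ Γ) : Idx Γ s → Idx Γ s
  | Sum.inl (a, i) => Sum.inl (⟨c * a.1, (hcΓ a.1).mp a.2⟩, i)
  | Sum.inr (m, i) => Sum.inr (⟨c * m.1, (hcs m.1).mp m.2⟩, i)

/-- The scaling coefficients of `σ`. -/
def coefσ : Idx Γ s → ℂ
  | Sum.inl (a, i) => τ a.1 * c ^ ((i : ℤ) - 1)
  | Sum.inr (m, i) => τ m.1 * c ^ (i : ℕ) * d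

variable (hcΓ : ∀ x : ℂ, x ∈ Γ ↔ c * x ∈ Γ)
    (hcs : ∀ x : ℂ, x - s ∈ Γ ↔ c * x - s ∈ Γ)

lemma sig_lgen (α : ℂ) (hα : α ∈ Γ) (i : ℕ) :
    sigAux Γ s (coefσ Γ s c τ d) (mIdx Γ s c hcΓ hcs) (lgen Γ s α hα i)
      = (τ α * c ^ ((i : ℤ) - 1)) • lgen Γ s (c * α) ((hcΓ α).mp hα) i := by
  simp [lgen, sigAux_single, coefσ, mIdx, Finsupp.smul_single]

lemma sig_ggen (μ : ℂ) (hμ : μ - s ∈ Γ) (i : ℕ) :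
    sigAux Γ s (coefσ Γ s c τ d) (mIdx Γ s c hcΓ hcs) (ggen Γ s μ hμ i)
      = (τ μ * c ^ i * d) • ggen Γ s (c * μ) ((hcs μ).mp hμ) i := by
  simp [ggen, sigAux_single, coefσ, mIdx, Finsupp.smul_single]

end Main

section Key

variable (Γ : AddSubgroup ℂ) (s : ℂ) (hs : 2 * s ∈ Γ) (c : ℂ) (τ : ℂ → ℂ) (d : ℂ)
variable (hcΓ : ∀ x : ℂ, x ∈ Γ ↔ c * x ∈ Γ)
variable (hcs : ∀ x : ℂ, x - s ∈ Γ ↔ c * x - s ∈ Γ)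

set_option maxHeartbeats 1600000 in
lemma sig_bk (hc0 : c ≠ 0)
    (hτ : ∀ x ∈ Omega Γ s, ∀ y ∈ Omega Γ s, τ (x + y) = τ x * τ y)
    (hd : d * d = c⁻¹) (a b : Idx Γ s) :
    sigAux Γ s (coefσ Γ s c τ d) (mIdx Γ s c hcΓ hcs) (bk Γ s hs a b)
      = (coefσ Γ s c τ d a * coefσ Γ s c τ d b) •
          bk Γ s hs (mIdx Γ s c hcΓ hcs a) (mIdx Γ s c hcΓ hcs b) := by
  obtain (⟨⟨α, hα⟩, i⟩ | ⟨⟨α, hα⟩, i⟩) := a <;> obtain (⟨⟨β, hβ⟩, j⟩ | ⟨⟨β, hβ⟩, j⟩) := b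
  · -- L L
    show sigAux Γ s _ _ ((β - α) • lgen Γ s (α + β) _ (i + j)
        + ((j : ℂ) - (i : ℂ)) • lgen Γ s (α + β) _ (i + j - 1)) = _
    rw [map_add, map_smul, map_smul, sig_lgen, sig_lgen]
    show _ = _ • ((c * β - c * α) • lgen Γ s (c * α + c * β) _ (i + j)
        + ((j : ℂ) - (i : ℂ)) • lgen Γ s (c * α + c * β) _ (i + j - 1))
    rw [lgen_congr Γ s _ ((hcΓ (α + β)).mp (add_mem hα hβ)) (mul_add c α β).symm (i + j),
        lgen_congr Γ s _ ((hcΓ (α + β)).mp (add_mem hα hβ)) (mul_add c α β).symm (i + j - 1)]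
    rw [smul_add, smul_smul, smul_smul, smul_smul, smul_smul]
    have hτab : τ (α + β) = τ α * τ β :=
      hτ α (gamma_mem_Omega Γ s hα) β (gamma_mem_Omega Γ s hβ)
    congr 1
    · congr 1
      simp only [coefσ, hτab]
      simp only [zpow_sub₀ hc0, zpow_natCast, zpow_one]
      push_cast
      field_simp
      ring
    · congr 1
      simp only [coefσ, hτab]
      rcases Nat.eq_zero_or_pos (i + j) with h | h
      · obtain ⟨hi, hj⟩ := Nat.add_eq_zero.mp h
        subst hi; subst hj; simp
      · have e : ((i + j - 1 : ℕ) : ℤ) = (i : ℤ) + j - 1 := by omega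
        rw [e]
        simp only [zpow_sub₀ hc0, zpow_natCast, zpow_add₀ hc0, zpow_one]
        field_simp
  · -- L G
    show sigAux Γ s _ _ ((β - α / 2) • ggen Γ s (α + β) _ (i + j)
        + ((j : ℂ) - (i : ℂ) / 2) • ggen Γ s (α + β) _ (i + j - 1)) = _
    rw [map_add, map_smul, map_smul, sig_ggen, sig_ggen]
    show _ = _ • ((c * β - c * α / 2) • ggen Γ s (c * α + c * β) _ (i + j)
        + ((j : ℂ) - (i : ℂ) / 2) • ggen Γ s (c * α + c * β) _ (i + j - 1))
    rw [ggen_congr Γ s _ ((hcs (α + β)).mp (memLG Γ s hα hβ)) (mul_add c α β).symm (i + j),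
        ggen_congr Γ s _ ((hcs (α + β)).mp (memLG Γ s hα hβ)) (mul_add c α β).symm (i + j - 1)]
    rw [smul_add, smul_smul, smul_smul, smul_smul, smul_smul]
    have hτab : τ (α + β) = τ α * τ β :=
      hτ α (gamma_mem_Omega Γ s hα) β (smu_mem_Omega Γ s hβ)
    congr 1
    · congr 1
      simp only [coefσ, hτab]
      simp only [zpow_sub₀ hc0, zpow_natCast, zpow_one]
      field_simp
      ring
    · congr 1
      simp only [coefσ, hτab]
      rcases Nat.eq_zero_or_pos (i + j) with h | h
      · obtain ⟨hi, hj⟩ := Nat.add_eq_zero.mp h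
        subst hi; subst hj; simp
      · obtain ⟨k, hk⟩ := Nat.exists_eq_add_of_le (show 1 ≤ i + j from h)
        have hij : i + j - 1 = k := by omega
        have hpow : c ^ i * c ^ j = c * c ^ k := by
          rw [← pow_add, hk, pow_add, pow_one]
        have hk2 : c ^ k = c ^ i * c ^ j / c := by
          rw [hpow]; exact (mul_div_cancel_left₀ _ hc0).symm
        rw [hij, hk2]
        simp only [zpow_sub₀ hc0, zpow_natCast, zpow_one]
        field_simp
  · -- G L
    show sigAux Γ s _ _ (-((α - β / 2) • ggen Γ s (β + α) _ (j + i)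
        + ((i : ℂ) - (j : ℂ) / 2) • ggen Γ s (β + α) _ (j + i - 1))) = _
    rw [map_neg, map_add, map_smul, map_smul, sig_ggen, sig_ggen]
    show _ = _ • -((c * α - c * β / 2) • ggen Γ s (c * β + c * α) _ (j + i)
        + ((i : ℂ) - (j : ℂ) / 2) • ggen Γ s (c * β + c * α) _ (j + i - 1))
    rw [ggen_congr Γ s _ ((hcs (β + α)).mp (memLG Γ s hβ hα)) (mul_add c β α).symm (j + i),
        ggen_congr Γ s _ ((hcs (β + α)).mp (memLG Γ s hβ hα)) (mul_add c β α).symm (j + i - 1)]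
    rw [smul_neg, neg_inj, smul_add, smul_smul, smul_smul, smul_smul, smul_smul]
    have hτab : τ (β + α) = τ β * τ α :=
      hτ β (gamma_mem_Omega Γ s hβ) α (smu_mem_Omega Γ s hα)
    congr 1
    · congr 1
      simp only [coefσ, hτab]
      simp only [zpow_sub₀ hc0, zpow_natCast, zpow_one]
      field_simp
      ring
    · congr 1
      simp only [coefσ, hτab]
      rcases Nat.eq_zero_or_pos (j + i) with h | h
      · obtain ⟨hj, hi⟩ := Nat.add_eq_zero.mp h
        subst hi; subst hj; simp
      · obtain ⟨k, hk⟩ := Nat.exists_eq_add_of_le (show 1 ≤ j + i from h)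
        have hij : j + i - 1 = k := by omega
        have hpow : c ^ j * c ^ i = c * c ^ k := by
          rw [← pow_add, hk, pow_add, pow_one]
        have hk2 : c ^ k = c ^ j * c ^ i / c := by
          rw [hpow]; exact (mul_div_cancel_left₀ _ hc0).symm
        rw [hij, hk2]
        simp only [zpow_sub₀ hc0, zpow_natCast, zpow_one]
        field_simp
  · -- G G
    show sigAux Γ s _ _ ((2 : ℂ) • lgen Γ s (α + β) _ (i + j)) = _
    rw [map_smul, sig_lgen]
    show _ = _ • ((2 : ℂ) • lgen Γ s (c * α + c * β) _ (i + j))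
    rw [lgen_congr Γ s _ ((hcΓ (α + β)).mp (memGG Γ s hs hα hβ)) (mul_add c α β).symm (i + j)]
    rw [smul_smul, smul_smul]
    have hτab : τ (α + β) = τ α * τ β :=
      hτ α (smu_mem_Omega Γ s hα) β (smu_mem_Omega Γ s hβ)
    congr 1
    simp only [coefσ, hτab]
    have hd' : d * d * c = 1 := by rw [hd]; exact inv_mul_cancel₀ hc0
    simp only [zpow_sub₀ hc0, zpow_natCast, zpow_one]
    field_simp
    linear_combination (-(τ α * τ β * c ^ i * c ^ j)) * hd'

end Key

section Assemble

variable (Γ : AddSubgroup ℂ) (s : ℂ)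

lemma sigAux_bijective (co : Idx Γ s → ℂ) (m m' : Idx Γ s → Idx Γ s)
    (hmm' : ∀ a, m (m' a) = a) (hm'm : ∀ a, m' (m a) = a) (hco : ∀ a, co a ≠ 0) :
    Function.Bijective (sigAux Γ s co m) := by
  have key1 : (sigAux Γ s (fun a => (co (m' a))⁻¹) m').comp (sigAux Γ s co m)
      = LinearMap.id := by
    refine Finsupp.lhom_ext fun a b => ?_
    rw [LinearMap.comp_apply, sigAux_single, sigAux_single, LinearMap.id_apply, hm'm,
      inv_mul_cancel_left₀ (hco a)]
  have key2 : (sigAux Γ s co m).comp (sigAux Γ s (fun a => (co (m' a))⁻¹) m')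
      = LinearMap.id := by
    refine Finsupp.lhom_ext fun a b => ?_
    rw [LinearMap.comp_apply, sigAux_single, sigAux_single, LinearMap.id_apply, hmm',
      mul_inv_cancel_left₀ (hco (m' a))]
  exact Function.bijective_iff_has_inverse.mpr
    ⟨sigAux Γ s (fun a => (co (m' a))⁻¹) m',
      fun x => LinearMap.congr_fun key1 x, fun x => LinearMap.congr_fun key2 x⟩

lemma sig_bkt (hs : 2 * s ∈ Γ) (c : ℂ) (τ : ℂ → ℂ) (d : ℂ)
    (hcΓ : ∀ x : ℂ, x ∈ Γ ↔ c * x ∈ Γ)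
    (hcs : ∀ x : ℂ, x - s ∈ Γ ↔ c * x - s ∈ Γ)
    (hc0 : c ≠ 0)
    (hτ : ∀ x ∈ Omega Γ s, ∀ y ∈ Omega Γ s, τ (x + y) = τ x * τ y)
    (hd : d * d = c⁻¹) (x y : SV Γ s) :
    sigAux Γ s (coefσ Γ s c τ d) (mIdx Γ s c hcΓ hcs) (bkt Γ s hs x y)
      = bkt Γ s hs (sigAux Γ s (coefσ Γ s c τ d) (mIdx Γ s c hcΓ hcs) x)
          (sigAux Γ s (coefσ Γ s c τ d) (mIdx Γ s c hcΓ hcs) y) := by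
  set σ := sigAux Γ s (coefσ Γ s c τ d) (mIdx Γ s c hcΓ hcs) with hσ
  have key : (bkB Γ s hs).compr₂ σ = ((bkB Γ s hs).compl₂ σ).comp σ := by
    ext a b
    simp only [LinearMap.compr₂_apply, LinearMap.compl₂_apply, LinearMap.comp_apply,
      LinearMap.coe_comp, Function.comp_apply, Finsupp.lsingle_apply]
    rw [bkB_single_single, one_mul, one_smul, hσ, sigAux_single, sigAux_single,
      mul_one, mul_one, bkB_single_single, sig_bk Γ s hs c τ d hcΓ hcs hc0 hτ hd]
  rw [bkt_eq_bkB, bkt_eq_bkB]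
  calc σ (bkB Γ s hs x y) = ((bkB Γ s hs).compr₂ σ) x y := rfl
    _ = (((bkB Γ s hs).compl₂ σ).comp σ) x y := by rw [key]
    _ = bkB Γ s hs (σ x) (σ y) := rfl

end Assemble

set_option maxHeartbeats 1600000 in
/-- Given `c` with `cΓ = Γ`, `c(s+Γ) = s+Γ`, a group homomorphism
`τ : (Ω,+) → (ℂ*,·)` and `d` with `d² = c⁻¹`, the linear map sending
`L_{α,i} ↦ τ(α) c^(i-1) L_{cα,i}` and `G_{μ,i} ↦ τ(μ) c^i d G_{cμ,i}` is an
automorphism of `SV[Γ,s]`. -/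
theorem aut_SV_construction (Γ : AddSubgroup ℂ) (hΓ : ∀ n : ℤ, (n : ℂ) ∈ Γ)
    (s : ℂ) (hs : 2 * s ∈ Γ)
    (c : ℂ) (hc0 : c ≠ 0) (hcΓ : ∀ x : ℂ, x ∈ Γ ↔ c * x ∈ Γ)
    (hcs : ∀ x : ℂ, x - s ∈ Γ ↔ c * x - s ∈ Γ)
    (τ : ℂ → ℂ) (hτ0 : ∀ x ∈ Omega Γ s, τ x ≠ 0)
    (hτ : ∀ x ∈ Omega Γ s, ∀ y ∈ Omega Γ s, τ (x + y) = τ x * τ y)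
    (d : ℂ) (hd0 : d ≠ 0) (hd : d * d = c⁻¹) :
    ∃ σ : SV Γ s →ₗ[ℂ] SV Γ s,
      Function.Bijective σ ∧
      (∀ x y : SV Γ s, σ (bkt Γ s hs x y) = bkt Γ s hs (σ x) (σ y)) ∧
      (∀ (α : ℂ) (hα : α ∈ Γ) (i : ℕ),
        σ (lgen Γ s α hα i) = (τ α * c ^ ((i : ℤ) - 1)) • lgen Γ s (c * α) ((hcΓ α).mp hα) i) ∧
      (∀ (μ : ℂ) (hμ : μ - s ∈ Γ) (i : ℕ),
        σ (ggen Γ s μ hμ i) = (τ μ * c ^ i * d) • ggen Γ s (c * μ) ((hcs μ).mp hμ) i) := by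
  classical
  have hcΓ' : ∀ x : ℂ, x ∈ Γ ↔ c⁻¹ * x ∈ Γ := fun x =>
    ⟨fun h => (hcΓ _).mpr (by rwa [mul_inv_cancel_left₀ hc0]),
     fun h => by have := (hcΓ _).mp h; rwa [mul_inv_cancel_left₀ hc0] at this⟩
  have hcs' : ∀ x : ℂ, x - s ∈ Γ ↔ c⁻¹ * x - s ∈ Γ := fun x =>
    ⟨fun h => (hcs _).mpr (by rwa [mul_inv_cancel_left₀ hc0]),
     fun h => by have := (hcs _).mp h; rwa [mul_inv_cancel_left₀ hc0] at this⟩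
  have hmm' : ∀ a, mIdx Γ s c hcΓ hcs (mIdx Γ s c⁻¹ hcΓ' hcs' a) = a := by
    rintro (⟨⟨α, hα⟩, i⟩ | ⟨⟨μ, hμ⟩, i⟩)
    · exact congrArg Sum.inl (Prod.ext (Subtype.ext (mul_inv_cancel_left₀ hc0 α)) rfl)
    · exact congrArg Sum.inr (Prod.ext (Subtype.ext (mul_inv_cancel_left₀ hc0 μ)) rfl)
  have hm'm : ∀ a, mIdx Γ s c⁻¹ hcΓ' hcs' (mIdx Γ s c hcΓ hcs a) = a := by
    rintro (⟨⟨α, hα⟩, i⟩ | ⟨⟨μ, hμ⟩, i⟩)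
    · exact congrArg Sum.inl (Prod.ext (Subtype.ext (inv_mul_cancel_left₀ hc0 α)) rfl)
    · exact congrArg Sum.inr (Prod.ext (Subtype.ext (inv_mul_cancel_left₀ hc0 μ)) rfl)
  have hco : ∀ a, coefσ Γ s c τ d a ≠ 0 := by
    rintro (⟨⟨α, hα⟩, i⟩ | ⟨⟨μ, hμ⟩, i⟩)
    · exact mul_ne_zero (hτ0 α (gamma_mem_Omega Γ s hα)) (zpow_ne_zero _ hc0)
    · exact mul_ne_zero
        (mul_ne_zero (hτ0 μ (smu_mem_Omega Γ s hμ)) (pow_ne_zero _ hc0)) hd0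
  refine ⟨sigAux Γ s (coefσ Γ s c τ d) (mIdx Γ s c hcΓ hcs), ?_, ?_, ?_, ?_⟩
  · exact sigAux_bijective Γ s _ _ (mIdx Γ s c⁻¹ hcΓ' hcs') hmm' hm'm hco
  · exact sig_bkt Γ s hs c τ d hcΓ hcs hc0 hτ hd
  · exact sig_lgen Γ s c τ d hcΓ hcs
  · exact sig_ggen Γ s c τ d hcΓ hcs

end SVSuper
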